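/- (Purified multi-phase convergence of DAC.) Let n be a positive integer and ε a real number with 0 < ε ≤ 1. Let (V_p)_{p∈ℕ} be a sequence of nonempty finite multisets of real numbers such that ⌊n/2⌋ + 1 ≤ |V_p| ≤ n for every p, every element of V_0 lies in [0, 1], and for every p, every element v of V_{p+1} can be written as v = (min(S) + max(S))/2 for some sub-multiset S of V_p with |S| = ⌊n/2⌋ + 1. Then for every p: (i) every element of V_p lies in [min(V_0), max(V_0)]; (ii) range(V_p) ≤ 2^{−p} · range(V_0); and (iii) if 2^{−p} ≤ ε, then any two elements of V_p differ by at most ε. -/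

import Mathlib

/-- The `j`-th smallest element (1-indexed) of a finite multiset of reals. -/
noncomputable def mnth (W : Multiset ℝ) (j : ℕ) : ℝ :=
  (W.sort (· ≤ ·)).getD (j - 1) 0

/-- The minimum of a (nonempty) multiset of reals. -/
noncomputable def mmin (W : Multiset ℝ) : ℝ := mnth W 1

/-- The maximum of a (nonempty) multiset of reals. -/
noncomputable def mmax (W : Multiset ℝ) : ℝ := mnth W (Multiset.card W)

lemma list_getD_mem {l : List ℝ} {i : ℕ} (h : i < l.length) : l.getD i 0 ∈ l := by
  rw [List.getD_eq_getElem _ _ h]; exact List.getElem_mem h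

lemma sorted_head_le {l : List ℝ} (hs : l.Pairwise (· ≤ ·)) {x : ℝ} (hx : x ∈ l) :
    l.getD 0 0 ≤ x := by
  cases l with
  | nil => simp at hx
  | cons a t =>
    simp only [List.getD_cons_zero]
    rcases List.mem_cons.1 hx with rfl | h
    · exact le_rfl
    · exact (List.pairwise_cons.1 hs).1 x h

lemma sorted_le_last {l : List ℝ} (hs : l.Pairwise (· ≤ ·)) {x : ℝ} (hx : x ∈ l) :
    x ≤ l.getD (l.length - 1) 0 := by
  induction l with
  | nil => simp at hx
  | cons a t ih =>
    cases t with
    | nil => simp at hx; simp [hx]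
    | cons b s =>
      have hs' := (List.pairwise_cons.1 hs).2
      have hlen : (b :: s).length - 1 < (b :: s).length := by simp
      have hmem : (b :: s).getD ((b :: s).length - 1) 0 ∈ (b :: s) := list_getD_mem hlen
      have hget : (a :: b :: s).getD ((a :: b :: s).length - 1) 0
          = (b :: s).getD ((b :: s).length - 1) 0 := by
        simp [List.getD_cons_succ]
      rw [hget]
      rcases List.mem_cons.1 hx with rfl | h
      · exact (List.pairwise_cons.1 hs).1 _ hmem
      · exact ih hs' h

lemma mmin_mem {W : Multiset ℝ} (h : W ≠ 0) : mmin W ∈ W := by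
  rw [← Multiset.mem_sort (· ≤ ·)]
  apply list_getD_mem
  simp [Multiset.card_pos.2 h]

lemma mmin_le {W : Multiset ℝ} {x : ℝ} (hx : x ∈ W) : mmin W ≤ x := by
  apply sorted_head_le (Multiset.pairwise_sort _ _)
  rwa [Multiset.mem_sort]

lemma mmax_mem {W : Multiset ℝ} (h : W ≠ 0) : mmax W ∈ W := by
  rw [← Multiset.mem_sort (· ≤ ·)]
  apply list_getD_mem
  have := Multiset.card_pos.2 h
  simp [mmax, mnth]
  omega

lemma le_mmax {W : Multiset ℝ} {x : ℝ} (hx : x ∈ W) : x ≤ mmax W := by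
  have : mmax W = (W.sort (· ≤ ·)).getD ((W.sort (· ≤ ·)).length - 1) 0 := by
    simp [mmax, mnth]
  rw [this]
  apply sorted_le_last (Multiset.pairwise_sort _ _)
  rwa [Multiset.mem_sort]

/-- purified multi-phase convergence of DAC. -/
theorem stmt_16 (n : ℕ) (hn : 0 < n) (ε : ℝ) (hε0 : 0 < ε) (hε1 : ε ≤ 1)
    (V : ℕ → Multiset ℝ)
    (hne : ∀ p : ℕ, V p ≠ 0)
    (hcard : ∀ p : ℕ, n / 2 + 1 ≤ Multiset.card (V p) ∧ Multiset.card (V p) ≤ n)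
    (hinit : ∀ x ∈ V 0, 0 ≤ x ∧ x ≤ 1)
    (hform : ∀ p : ℕ, ∀ v ∈ V (p + 1), ∃ S : Multiset ℝ, S ≤ V p ∧
      Multiset.card S = n / 2 + 1 ∧ v = (mmin S + mmax S) / 2) :
    ∀ p : ℕ,
      (∀ x ∈ V p, mmin (V 0) ≤ x ∧ x ≤ mmax (V 0)) ∧
      mmax (V p) - mmin (V p) ≤ (2 : ℝ) ^ (-(p : ℤ)) * (mmax (V 0) - mmin (V 0)) ∧
      ((2 : ℝ) ^ (-(p : ℤ)) ≤ ε → ∀ x ∈ V p, ∀ y ∈ V p, |x - y| ≤ ε) := by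
  set a := mmin (V 0) with ha
  set b := mmax (V 0) with hb
  -- invariant
  have hinv : ∀ p, ∀ x ∈ V p, a ≤ x ∧ x ≤ b := by
    intro p
    induction p with
    | zero => intro x hx; exact ⟨mmin_le hx, le_mmax hx⟩
    | succ p ih =>
      intro x hx
      obtain ⟨S, hS, hcS, hxS⟩ := hform p x hx
      have hSne : S ≠ 0 := by
        intro h; rw [h] at hcS; simp at hcS
      have h1 := ih _ (Multiset.mem_of_le hS (mmin_mem hSne))
      have h2 := ih _ (Multiset.mem_of_le hS (mmax_mem hSne))
      constructor <;> (rw [hxS]; linarith)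
  -- one-step contraction
  have hstep : ∀ p, mmax (V (p+1)) - mmin (V (p+1)) ≤ (mmax (V p) - mmin (V p)) / 2 := by
    intro p
    have hxm := mmax_mem (hne (p+1))
    have hym := mmin_mem (hne (p+1))
    obtain ⟨S, hS, hcS, hxS⟩ := hform p _ hxm
    obtain ⟨T, hT, hcT, hyT⟩ := hform p _ hym
    have hSne : S ≠ 0 := by intro h; rw [h] at hcS; simp at hcS
    have hTne : T ≠ 0 := by intro h; rw [h] at hcT; simp at hcT
    -- common element
    have hU : Multiset.card (S ∪ T) ≤ n :=
      le_trans (Multiset.card_le_card (Multiset.union_le hS hT)) (hcard p).2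
    have hcui : Multiset.card (S ∪ T) + Multiset.card (S ∩ T)
        = Multiset.card S + Multiset.card T := by
      rw [← Multiset.card_add, Multiset.union_add_inter, Multiset.card_add]
    have hIpos : 0 < Multiset.card (S ∩ T) := by omega
    obtain ⟨m, hm⟩ := Multiset.card_pos_iff_exists_mem.1 hIpos
    have hmS : m ∈ S := Multiset.mem_of_le (Multiset.inter_le_left) hm
    have hmT : m ∈ T := Multiset.mem_of_le (Multiset.inter_le_right) hm
    have h1 : mmin S ≤ m := mmin_le hmS
    have h2 : mmax S ≤ mmax (V p) := le_mmax (Multiset.mem_of_le hS (mmax_mem hSne))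
    have h3 : m ≤ mmax T := le_mmax hmT
    have h4 : mmin (V p) ≤ mmin T := mmin_le (Multiset.mem_of_le hT (mmin_mem hTne))
    rw [hxS, hyT]; linarith
  -- range bound
  have hrange : ∀ p, mmax (V p) - mmin (V p) ≤ (2 : ℝ) ^ (-(p : ℤ)) * (b - a) := by
    intro p
    induction p with
    | zero => simp [ha, hb]
    | succ p ih =>
      have h2 : (2 : ℝ) ^ (-((p:ℕ)+1 : ℤ)) = (2 : ℝ) ^ (-(p : ℤ)) / 2 := by
        rw [neg_add, zpow_add₀ (by norm_num : (2:ℝ) ≠ 0), zpow_neg_one]; ring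
      have := hstep p
      push_cast
      rw [h2]
      linarith
  intro p
  refine ⟨hinv p, hrange p, ?_⟩
  intro hεp x hx y hy
  have hba : b - a ≤ 1 := by
    have h1 := hinit a (mmin_mem (hne 0))
    have h2 := hinit b (mmax_mem (hne 0))
    linarith
  have hpow : (0:ℝ) < (2 : ℝ) ^ (-(p : ℤ)) := zpow_pos (by norm_num) _
  have h1 : mmin (V p) ≤ x := mmin_le hx
  have h2 : x ≤ mmax (V p) := le_mmax hx
  have h3 : mmin (V p) ≤ y := mmin_le hy
  have h4 : y ≤ mmax (V p) := le_mmax hy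
  have h5 : (2 : ℝ) ^ (-(p : ℤ)) * (b - a) ≤ (2 : ℝ) ^ (-(p : ℤ)) := by
    nlinarith
  have := hrange p
  rw [abs_sub_le_iff]
  constructor <;> linarith
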